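/- For every m ≥ 1 and k ≥ 1 with k ≢ 1 (mod 3), there exists a tree T on exactly (k+1)m + (m−1)(k²+k)/3 vertices with Tmd_k(T) = m. Construction: take any tree H on m vertices; replace each vertex of H by a sensor with a pendant path of length k attached, and replace each edge of H by a path with d = 2⌊(k+1)/3⌋ or d = 2k/3 internal vertices (the nearest even integer to (2k+1)/3), where from the internal vertex of type i a pendant path of length min{k−i, k−(d+1−i)} is attached. -/

import Mathlib

open SimpleGraph Finset

variable {V : Type*}

/-- Truncated graph distance `d_k(x,y) = min(d(x,y), k+1)`. -/
noncomputable def dk (G : SimpleGraph V) (k : ℕ) (x y : V) : ℕ := min (G.dist x y) (k + 1)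

/-- `w` lies on a shortest path (in a tree: the unique path) between `x` and `y`. -/
def OnPath (G : SimpleGraph V) (x y w : V) : Prop :=
  G.dist x w + G.dist w y = G.dist x y

/-- `S` is a threshold-`k` resolving set for `G`. -/
def ThresholdResolving (G : SimpleGraph V) (k : ℕ) (S : Set V) : Prop :=
  (∀ x y : V, x ≠ y → ∃ s ∈ S, dk G k s x ≠ dk G k s y) ∧
  (∀ x : V, ∃ s ∈ S, G.dist s x ≤ k)

/-- A sensor `s` directly measures `x`: `d(s,x) ≤ k` and no other sensor lies on the
path from `s` to `x`. -/
def DirectlyMeasures (G : SimpleGraph V) (k : ℕ) (S : Set V) (s x : V) : Prop :=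
  G.dist s x ≤ k ∧ ∀ t ∈ S, t ≠ s → ¬ OnPath G s x t

/-- The threshold-`k` metric dimension of a finite graph. -/
noncomputable def Tmd (G : SimpleGraph V) [Fintype V] (k : ℕ) : ℕ :=
  sInf {m | ∃ S : Finset V, ThresholdResolving G k ↑S ∧ S.card = m}

/-- The path between the sensors `s₁ ≠ s₂` contains no other sensor. -/
def SensorPath (G : SimpleGraph V) (S : Set V) (s₁ s₂ : V) : Prop :=
  s₁ ≠ s₂ ∧ s₁ ∈ S ∧ s₂ ∈ S ∧ ∀ t ∈ S, OnPath G s₁ s₂ t → t = s₁ ∨ t = s₂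

/-- The edge `{a,b}` lies on the (tree-)path between `x` and `y`. -/
def EdgeOnPath (G : SimpleGraph V) (x y a b : V) : Prop :=
  G.Adj a b ∧ OnPath G x y a ∧ OnPath G x y b

/-- A leaf-path of length `ℓ` starting at `v`: an induced path `v = p 0, p 1, …, p ℓ`
with `deg v ≥ 3`, ending in a leaf, all internal vertices of degree 2. -/
def IsLeafPath (G : SimpleGraph V) [Fintype V] [DecidableRel G.Adj]
    (v : V) (ℓ : ℕ) (p : Fin (ℓ + 1) → V) : Prop :=
  Function.Injective p ∧ p 0 = v ∧ 3 ≤ G.degree v ∧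
  (∀ i : Fin ℓ, G.Adj (p i.castSucc) (p i.succ)) ∧
  G.degree (p (Fin.last ℓ)) = 1 ∧
  ∀ i : Fin (ℓ + 1), (i : ℕ) ≠ 0 → (i : ℕ) ≠ ℓ → G.degree (p i) = 2

/-- Upper complexity of a path of length `ℓ` (with `ℓ = q(3k+2)+r`). -/
def cbar (k ℓ : ℕ) : ℕ :=
  2 * (ℓ / (3 * k + 2)) + (if 1 ≤ ℓ % (3 * k + 2) then 1 else 0) +
    (if 2 * k + 2 ≤ ℓ % (3 * k + 2) then 1 else 0)

/-- Lower complexity of a path of length `ℓ` (with `ℓ = q(3k+2)+r`). -/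
def clow (k ℓ : ℕ) : ℕ :=
  2 * (ℓ / (3 * k + 2)) + (if k + 1 ≤ ℓ % (3 * k + 2) then 1 else 0) +
    (if 2 * k + 2 ≤ ℓ % (3 * k + 2) then 1 else 0)

/-- The type of a vertex `v` with respect to the sensor pair `(s, s')`. -/
noncomputable def typ (G : SimpleGraph V) (s s' v : V) : ℤ :=
  ((G.dist v s : ℤ) - (G.dist v s' : ℤ) + (G.dist s s' : ℤ)) / 2

/-- The attraction of the pair of sensors `{s, s'}`. -/
def PairAttraction (G : SimpleGraph V) (k : ℕ) (S : Set V) (s s' : V) : Set V :=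
  {x | x ∉ S ∧ DirectlyMeasures G k S s x ∧ DirectlyMeasures G k S s' x ∧
    (∀ t ∈ S, t ≠ s → t ≠ s' → ¬ DirectlyMeasures G k S t x) ∧
    ∀ y : V, y ≠ x → y ∉ S →
      (∀ t ∈ S, t ≠ s → t ≠ s' → ¬ DirectlyMeasures G k S t y) →
      dk G k s x ≠ dk G k s y ∨ dk G k s' x ≠ dk G k s' y}

/-- The subset of sensors `S' ⊆ S` minimally resolves the vertex `x`. -/
def MinimallyResolves (G : SimpleGraph V) (k : ℕ) (S S' : Set V) (x : V) : Prop :=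
  x ∉ S ∧ (∀ s ∈ S', G.dist s x ≤ k) ∧
  (∀ t ∈ S, t ∉ S' → ¬ DirectlyMeasures G k S t x) ∧
  (∀ y : V, y ≠ x → (∀ t ∈ S, t ∉ S' → ¬ DirectlyMeasures G k S t y) →
    ∃ s ∈ S', dk G k s x ≠ dk G k s y) ∧
  (∀ s ∈ S', DirectlyMeasures G k S s x)

namespace Stmt16
variable {V W : Type*} {G : SimpleGraph V} {H : SimpleGraph W}

lemma iso_dist (φ : G ≃g H) (x y : V) : H.dist (φ x) (φ y) = G.dist x y := by
  by_cases h : G.Reachable x y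
  · apply le_antisymm
    · obtain ⟨w, hw⟩ := h.exists_walk_length_eq_dist
      calc H.dist (φ x) (φ y) ≤ (w.map φ.toHom).length := SimpleGraph.dist_le _
        _ = G.dist x y := by rw [SimpleGraph.Walk.length_map, hw]
    · have h' : H.Reachable (φ x) (φ y) := Iso.reachable_iff.mpr h
      obtain ⟨w, hw⟩ := h'.exists_walk_length_eq_dist
      have := SimpleGraph.dist_le (w.map φ.symm.toHom)
      simp only [SimpleGraph.Walk.length_map, hw] at this
      simpa using this
  · rw [SimpleGraph.dist_eq_zero_of_not_reachable h,
      SimpleGraph.dist_eq_zero_of_not_reachable (fun h' => h (Iso.reachable_iff.mp h'))]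

lemma iso_isTree (φ : G ≃g H) (ht : G.IsTree) : H.IsTree := by
  constructor
  · exact (Iso.connected_iff φ).mp ht.isConnected
  · intro v w hw
    exact ht.IsAcyclic (w.map φ.symm.toHom)
      ((SimpleGraph.Walk.map_isCycle_iff_of_injective
        (fun a b hab => φ.symm.injective hab)).mpr hw) 


lemma TR_map (φ : G ≃g H) (k : ℕ) (S : Set V) (h : ThresholdResolving G k S) :
    ThresholdResolving H k (φ '' S) := by
  obtain ⟨h1, h2⟩ := h
  constructor
  · intro x y hxy
    obtain ⟨s, hs, hd⟩ := h1 (φ.symm x) (φ.symm y) (fun hc => hxy (by simpa using congrArg φ hc))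
    refine ⟨φ s, Set.mem_image_of_mem _ hs, ?_⟩
    unfold dk at hd ⊢
    rwa [show x = φ (φ.symm x) by simp, show y = φ (φ.symm y) by simp,
      iso_dist φ, iso_dist φ]
  · intro x
    obtain ⟨s, hs, hd⟩ := h2 (φ.symm x)
    refine ⟨φ s, Set.mem_image_of_mem _ hs, ?_⟩
    rwa [show x = φ (φ.symm x) by simp, iso_dist φ]

lemma Tmd_iso (φ : G ≃g H) [Fintype V] [Fintype W] (k : ℕ) : Tmd H k = Tmd G k := by
  unfold Tmd
  apply congrArg sInf
  ext n
  simp only [Set.mem_setOf_eq]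
  constructor
  · rintro ⟨S, hS, rfl⟩
    refine ⟨S.map ⟨φ.symm, fun a b hab => φ.symm.injective hab⟩, ?_, Finset.card_map _⟩
    have := TR_map φ.symm k (↑S) hS
    rw [Finset.coe_map]; exact this
  · rintro ⟨S, hS, rfl⟩
    refine ⟨S.map ⟨φ, fun a b hab => φ.injective hab⟩, ?_, Finset.card_map _⟩
    have := TR_map φ k (↑S) hS
    rw [Finset.coe_map]; exact this



lemma isBridge_of_cut {G : SimpleGraph V} {v w : V} (hadj : G.Adj v w) (f : V → Prop)
    (hfv : f v) (hfw : ¬ f w)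
    (hcut : ∀ a b, G.Adj a b → ¬(a = v ∧ b = w) → ¬(a = w ∧ b = v) → (f a ↔ f b)) :
    G.IsBridge s(v, w) := by
  rw [SimpleGraph.isBridge_iff]
  intro hr
  have key : ∀ {a b : V}, (G \ fromEdgeSet {s(v,w)}).Reachable a b → (f a ↔ f b) := by
    intro a b hab
    obtain ⟨p⟩ := hab
    induction p with
    | nil => exact Iff.rfl
    | @cons a c b h q ih =>
      rw [SimpleGraph.sdiff_adj, SimpleGraph.fromEdgeSet_adj] at h
      obtain ⟨hG, hne⟩ := h
      have h1 : ¬(a = v ∧ c = w) := by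
        rintro ⟨rfl, rfl⟩; exact hne ⟨by simp, hG.ne⟩
      have h2 : ¬(a = w ∧ c = v) := by
        rintro ⟨rfl, rfl⟩; exact hne ⟨by simp [Sym2.eq_swap], hG.ne⟩
      exact (hcut a c hG h1 h2).trans ih
  exact hfw ((key hr).mp hfv)

section Construction
variable (k e m : ℕ)

def Pm : ℕ := (m - 1) * (2 * e + 1)

def hgt (p : ℕ) : ℕ :=
  if p % (2 * e + 1) = 0 then k else k - max (p % (2 * e + 1)) (2 * e + 1 - p % (2 * e + 1))

lemma hgt_le (p : ℕ) : hgt k e p ≤ k := by unfold hgt; split <;> omega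

abbrev Vt := {v : Fin (Pm e m + 1) × Fin (k + 1) // (v.2 : ℕ) ≤ hgt k e (v.1 : ℕ)}

variable {k e m} in
def vp (x : Vt k e m) : ℕ := x.1.1.1
variable {k e m} in
def vq (x : Vt k e m) : ℕ := x.1.2.1

variable {k e m} in
lemma vt_eq_iff (x y : Vt k e m) : x = y ↔ (vp x = vp y ∧ vq x = vq y) := by
  constructor
  · rintro rfl; exact ⟨rfl, rfl⟩
  · rintro ⟨h1, h2⟩
    apply Subtype.ext
    apply Prod.ext <;> [exact Fin.ext h1; exact Fin.ext h2]

variable {k e m} in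
lemma vt_bounds (x : Vt k e m) : vp x ≤ Pm e m ∧ vq x ≤ hgt k e (vp x) := by
  refine ⟨?_, x.2⟩
  exact Nat.lt_succ_iff.mp x.1.1.2

def Gr : SimpleGraph (Vt k e m) where
  Adj x y := (vp x = vp y ∧ (vq x + 1 = vq y ∨ vq y + 1 = vq x)) ∨
    (vq x = 0 ∧ vq y = 0 ∧ (vp x + 1 = vp y ∨ vp y + 1 = vp x))
  symm := ⟨by intro x y h; tauto⟩
  loopless := ⟨by intro x h; rcases h with ⟨_, h | h⟩ | ⟨_, _, h | h⟩ <;> omega⟩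

variable {k e m} in
lemma gr_adj (x y : Vt k e m) : (Gr k e m).Adj x y ↔
    ((vp x = vp y ∧ (vq x + 1 = vq y ∨ vq y + 1 = vq x)) ∨
    (vq x = 0 ∧ vq y = 0 ∧ (vp x + 1 = vp y ∨ vp y + 1 = vp x))) := Iff.rfl

def mkv (p q : ℕ) (hp : p ≤ Pm e m) (hq : q ≤ hgt k e p) : Vt k e m :=
  ⟨(⟨p, by omega⟩, ⟨q, by have := hgt_le k e p; omega⟩), hq⟩

@[simp] lemma vp_mkv (p q hp hq) : vp (mkv k e m p q hp hq) = p := rfl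
@[simp] lemma vq_mkv (p q hp hq) : vq (mkv k e m p q hp hq) = q := rfl

def Dc (a b : ℕ × ℕ) : ℕ :=
  if a.1 = b.1 then (a.2 - b.2) + (b.2 - a.2) else ((a.1 - b.1) + (b.1 - a.1)) + a.2 + b.2

variable {k e m} in
def Dv (x y : Vt k e m) : ℕ := Dc (vp x, vq x) (vp y, vq y)

lemma hgt_zero_mod (p : ℕ) (h : p % (2*e+1) = 0) : hgt k e p = k := by unfold hgt; simp [h]

variable {k e m} in
lemma mkv_congr {p q p' q' : ℕ} {hp hq hp' hq'} (h1 : p = p') (h2 : q = q') :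
    mkv k e m p q hp hq = mkv k e m p' q' hp' hq' := by subst h1; subst h2; rfl

def colW (p : ℕ) (hp : p ≤ Pm e m) (q' : ℕ) :
    (n : ℕ) → (hq : q' + n ≤ hgt k e p) →
      (Gr k e m).Walk (mkv k e m p (q' + n) hp hq) (mkv k e m p q' hp (by omega))
  | 0, hq => SimpleGraph.Walk.nil
  | n+1, hq =>
      SimpleGraph.Walk.cons
        (show (Gr k e m).Adj (mkv k e m p (q' + (n+1)) hp hq) (mkv k e m p (q' + n) hp (by omega))
          from Or.inl ⟨rfl, Or.inr rfl⟩)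
        (colW p hp q' n (by omega))

lemma colW_length (p hp q' n hq) : (colW k e m p hp q' n hq).length = n := by
  induction n with
  | zero => rfl
  | succ n ih => simpa [colW] using ih (by omega)

def spineW (p : ℕ) :
    (n : ℕ) → (h : p + n ≤ Pm e m) →
      (Gr k e m).Walk (mkv k e m (p + n) 0 h (Nat.zero_le _)) (mkv k e m p 0 (by omega) (Nat.zero_le _))
  | 0, h => SimpleGraph.Walk.nil
  | n+1, h =>
      SimpleGraph.Walk.cons
        (show (Gr k e m).Adj (mkv k e m (p + (n+1)) 0 h (Nat.zero_le _))
            (mkv k e m (p + n) 0 (by omega) (Nat.zero_le _))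
          from Or.inr ⟨rfl, rfl, Or.inr rfl⟩)
        (spineW p n (by omega))

lemma spineW_length (p n h) : (spineW k e m p n h).length = n := by
  induction n with
  | zero => rfl
  | succ n ih => simpa [spineW] using ih (by omega)

lemma exists_walk_mk (p q p' q' : ℕ) (hp : p ≤ Pm e m) (hq : q ≤ hgt k e p)
    (hp' : p' ≤ Pm e m) (hq' : q' ≤ hgt k e p') :
    ∃ w : (Gr k e m).Walk (mkv k e m p q hp hq) (mkv k e m p' q' hp' hq'),
      w.length = Dc (p, q) (p', q') := by
  by_cases hpp : p = p'
  · subst hpp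
    rcases le_total q' q with h | h
    · refine ⟨(colW k e m p hp q' (q - q') (by omega)).copy (mkv_congr rfl (by omega)) (mkv_congr rfl rfl), ?_⟩
      rw [SimpleGraph.Walk.length_copy, colW_length]
      simp [Dc]; omega
    · refine ⟨((colW k e m p hp q (q' - q) (by omega)).copy (mkv_congr rfl (by omega)) (mkv_congr rfl rfl)).reverse, ?_⟩
      rw [SimpleGraph.Walk.length_reverse, SimpleGraph.Walk.length_copy, colW_length]
      simp [Dc]; omega
  · obtain ⟨wx, hwx⟩ : ∃ w : (Gr k e m).Walk (mkv k e m p q hp hq) (mkv k e m p 0 hp (Nat.zero_le _)), w.length = q :=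
      ⟨(colW k e m p hp 0 q (by omega)).copy (mkv_congr rfl (Nat.zero_add q)) (mkv_congr rfl rfl),
        by rw [SimpleGraph.Walk.length_copy, colW_length]⟩
    obtain ⟨wy, hwy⟩ : ∃ w : (Gr k e m).Walk (mkv k e m p' q' hp' hq') (mkv k e m p' 0 hp' (Nat.zero_le _)), w.length = q' :=
      ⟨(colW k e m p' hp' 0 q' (by omega)).copy (mkv_congr rfl (Nat.zero_add q')) (mkv_congr rfl rfl),
        by rw [SimpleGraph.Walk.length_copy, colW_length]⟩
    rcases le_total p p' with h | h
    · obtain ⟨ws, hws⟩ : ∃ w : (Gr k e m).Walk (mkv k e m p' 0 hp' (Nat.zero_le _)) (mkv k e m p 0 hp (Nat.zero_le _)), w.length = p' - p :=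
        ⟨(spineW k e m p (p' - p) (by omega)).copy (mkv_congr (show p + (p' - p) = p' by omega) rfl) (mkv_congr rfl rfl),
          by rw [SimpleGraph.Walk.length_copy, spineW_length]⟩
      refine ⟨wx.append (ws.reverse.append wy.reverse), ?_⟩
      simp only [SimpleGraph.Walk.length_append, SimpleGraph.Walk.length_reverse, hwx, hwy, hws]
      simp [Dc, hpp]; omega
    · obtain ⟨ws, hws⟩ : ∃ w : (Gr k e m).Walk (mkv k e m p 0 hp (Nat.zero_le _)) (mkv k e m p' 0 hp' (Nat.zero_le _)), w.length = p - p' :=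
        ⟨(spineW k e m p' (p - p') (by omega)).copy (mkv_congr (show p' + (p - p') = p by omega) rfl) (mkv_congr rfl rfl),
          by rw [SimpleGraph.Walk.length_copy, spineW_length]⟩
      refine ⟨wx.append (ws.append wy.reverse), ?_⟩
      simp only [SimpleGraph.Walk.length_append, SimpleGraph.Walk.length_reverse, hwx, hwy, hws]
      simp [Dc, hpp]; omega

variable {k e m} in
lemma exists_walk (x y : Vt k e m) : ∃ w : (Gr k e m).Walk x y, w.length = Dv x y := by
  obtain ⟨hpx, hqx⟩ := vt_bounds x
  obtain ⟨hpy, hqy⟩ := vt_bounds y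
  have hx : x = mkv k e m (vp x) (vq x) hpx hqx := by rw [vt_eq_iff]; exact ⟨rfl, rfl⟩
  have hy : y = mkv k e m (vp y) (vq y) hpy hqy := by rw [vt_eq_iff]; exact ⟨rfl, rfl⟩
  obtain ⟨w, hw⟩ := exists_walk_mk k e m (vp x) (vq x) (vp y) (vq y) hpx hqx hpy hqy
  exact ⟨w.copy hx.symm hy.symm, by rw [SimpleGraph.Walk.length_copy, hw]; rfl⟩

variable {k e m} in
lemma Dv_symm (x y : Vt k e m) : Dv x y = Dv y x := by
  unfold Dv Dc; split_ifs <;> omega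

variable {k e m} in
lemma Dv_lip {x y z : Vt k e m} (h : (Gr k e m).Adj y z) : Dv x z ≤ Dv x y + 1 := by
  rw [gr_adj] at h
  unfold Dv Dc
  rcases h with ⟨h1, h2 | h2⟩ | ⟨h1, h2, h3 | h3⟩ <;> split_ifs <;> simp_all <;> omega

variable {k e m} in
lemma D_le_length {x y : Vt k e m} (w : (Gr k e m).Walk x y) : Dv x y ≤ w.length := by
  induction w with
  | nil => unfold Dv Dc; simp
  | @cons a b c h w ih =>
    have : Dv a c ≤ Dv b c + 1 := by
      rw [Dv_symm a c, Dv_symm b c]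
      exact Dv_lip ((Gr k e m).adj_symm h)
    simpa [SimpleGraph.Walk.length_cons] using le_trans this (by omega)

variable {k e m} in
lemma dist_eq_Dv (x y : Vt k e m) : (Gr k e m).dist x y = Dv x y := by
  obtain ⟨w, hw⟩ := exists_walk x y
  refine le_antisymm (hw ▸ SimpleGraph.dist_le w) ?_
  obtain ⟨w', hw'⟩ := (SimpleGraph.Walk.reachable w).exists_walk_length_eq_dist
  exact hw' ▸ D_le_length w'

lemma gr_connected (hm : 1 ≤ m) : (Gr k e m).Connected := by
  rw [SimpleGraph.connected_iff]
  constructor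
  · intro x y
    exact SimpleGraph.Walk.reachable (exists_walk x y).choose
  · exact ⟨mkv k e m 0 0 (Nat.zero_le _) (Nat.zero_le _)⟩

variable {k e m} in
lemma bridge_pend {v w : Vt k e m} (h : (Gr k e m).Adj v w) (hp : vp v = vp w)
    (hq : vq v + 1 = vq w) : (Gr k e m).IsBridge s(w, v) := by
  apply isBridge_of_cut ((Gr k e m).adj_symm h) (fun x => vp x = vp v ∧ vq v + 1 ≤ vq x)
  · exact ⟨hp.symm, by omega⟩
  · omega
  · intro a b hab h1 h2
    rw [gr_adj] at hab
    rw [vt_eq_iff, vt_eq_iff] at h1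
    rw [vt_eq_iff, vt_eq_iff] at h2
    rcases hab with ⟨g1, g2 | g2⟩ | ⟨g1, g2, g3 | g3⟩ <;> constructor <;> intro <;> omega

variable {k e m} in
lemma bridge_spine {v w : Vt k e m} (h : (Gr k e m).Adj v w) (hq : vq v = 0) (hq' : vq w = 0)
    (hp : vp v + 1 = vp w) : (Gr k e m).IsBridge s(w, v) := by
  apply isBridge_of_cut ((Gr k e m).adj_symm h) (fun x => vp w ≤ vp x)
  · omega
  · omega
  · intro a b hab h1 h2
    rw [gr_adj] at hab
    rw [vt_eq_iff, vt_eq_iff] at h1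
    rw [vt_eq_iff, vt_eq_iff] at h2
    rcases hab with ⟨g1, g2 | g2⟩ | ⟨g1, g2, g3 | g3⟩ <;> constructor <;> intro <;> omega

lemma gr_acyclic : (Gr k e m).IsAcyclic := by
  rw [SimpleGraph.isAcyclic_iff_forall_adj_isBridge]
  intro v w hadj
  have h' := hadj
  rw [gr_adj] at h'
  rcases h' with ⟨h1, h2 | h2⟩ | ⟨h1, h2, h3 | h3⟩
  · rw [Sym2.eq_swap]; exact bridge_pend hadj h1 h2
  · exact bridge_pend ((Gr k e m).adj_symm hadj) h1.symm h2
  · rw [Sym2.eq_swap]; exact bridge_spine hadj h1 h2 h3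
  · exact bridge_spine ((Gr k e m).adj_symm hadj) h2 h1 h3

lemma gr_isTree (hm : 1 ≤ m) : (Gr k e m).IsTree :=
  ⟨gr_connected k e m hm, gr_acyclic k e m⟩


lemma hgt_mod (p : ℕ) : hgt k e p = if p % (2*e+1) = 0 then k
    else k - max (p % (2*e+1)) (2*e+1 - p % (2*e+1)) := rfl

lemma sum_block (h2e : 2*e ≤ k) (b : ℕ) (hb : b % (2*e+1) = 0) :
    ∑ j ∈ range (2*e+1), (hgt k e (b + 1 + j) + 1) = e*(2*k+1-3*e) + (k+1) := by
  obtain ⟨t, rfl⟩ := Nat.dvd_of_mod_eq_zero hb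
  have hmod : ∀ j, ((2*e+1) * t + 1 + j) % (2*e+1) = (1+j) % (2*e+1) := by
    intro j; rw [add_assoc, Nat.mul_add_mod]
  have hterm : ∀ j < 2*e, hgt k e ((2*e+1)*t + 1 + j) + 1 = k + 1 - max (j+1) (2*e-j) := by
    intro j hj
    rw [hgt_mod, hmod, Nat.mod_eq_of_lt (by omega), if_neg (by omega)]
    omega
  rw [Finset.sum_range_succ]
  have hlast : hgt k e ((2*e+1)*t + 1 + 2*e) + 1 = k + 1 := by
    rw [hgt_mod, hmod, show 1+2*e = 2*e+1 by omega, Nat.mod_self, if_pos rfl]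
  rw [hlast]
  have : ∑ j ∈ range (2*e), (hgt k e ((2*e+1)*t + 1 + j) + 1) = e*(2*k+1-3*e) := by
    calc ∑ j ∈ range (2*e), (hgt k e ((2*e+1)*t + 1 + j) + 1)
        = ∑ j ∈ range (2*e), (k + 1 - max (j+1) (2*e-j)) :=
          Finset.sum_congr rfl (fun j hj => hterm j (Finset.mem_range.mp hj))
      _ = ∑ j ∈ range e, ((k + 1 - max (j+1) (2*e-j)) + (k + 1 - max ((e+j)+1) (2*e-(e+j)))) := by
          rw [show 2*e = e+e by ring, Finset.sum_range_add, ← Finset.sum_add_distrib]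
      _ = ∑ _j ∈ range e, (2*k+1-3*e) :=
          Finset.sum_congr rfl (fun j hj => by have := Finset.mem_range.mp hj; omega)
      _ = e * (2*k+1-3*e) := by rw [Finset.sum_const, Finset.card_range, smul_eq_mul]
  omega

lemma sum_hgt (h2e : 2*e ≤ k) (hm : 1 ≤ m) :
    ∑ p ∈ range (Pm e m + 1), (hgt k e p + 1) = (k+1)*m + (m-1)*(e*(2*k+1-3*e)) := by
  induction m, hm using Nat.le_induction with
  | base =>
    simp [Pm, hgt]
  | succ n hn ih =>
    have hsplit : Pm e (n+1) + 1 = (Pm e n + 1) + (2*e+1) := by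
      unfold Pm; simp only [Nat.add_sub_cancel]
      have : n = (n-1) + 1 := by omega
      nth_rewrite 1 [this]
      ring
    rw [hsplit, Finset.sum_range_add, ih]
    have hb : Pm e n % (2*e+1) = 0 := Nat.mul_mod_left _ _
    have hblock : ∑ j ∈ range (2*e+1), (hgt k e (Pm e n + 1 + j) + 1)
        = e*(2*k+1-3*e) + (k+1) := sum_block k e h2e _ hb
    rw [hblock]
    have h1 : (k+1)*(n+1) = (k+1)*n + (k+1) := by ring
    have h2 : (n+1-1) * (e*(2*k+1-3*e)) = (n-1) * (e*(2*k+1-3*e)) + (e*(2*k+1-3*e)) := by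
      rw [Nat.add_sub_cancel]
      have : n = (n-1)+1 := by omega
      nth_rewrite 1 [this]
      ring
    omega

def toSigma : Vt k e m ≃ Σ p : Fin (Pm e m + 1), Fin (hgt k e (p : ℕ) + 1) where
  toFun v := ⟨v.1.1, ⟨(v.1.2 : ℕ), by have := v.2; omega⟩⟩
  invFun s := ⟨(s.1, ⟨(s.2 : ℕ), by have := s.2.2; have := hgt_le k e (s.1 : ℕ); omega⟩),
    by show (s.2 : ℕ) ≤ hgt k e (s.1 : ℕ); have := s.2.2; omega⟩
  left_inv v := rfl
  right_inv s := rfl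

lemma card_vt (h2e : 2*e ≤ k) (hm : 1 ≤ m) :
    Fintype.card (Vt k e m) = (k+1)*m + (m-1)*(e*(2*k+1-3*e)) := by
  rw [Fintype.card_congr (toSigma k e m), Fintype.card_sigma]
  simp only [Fintype.card_fin]
  rw [Fin.sum_univ_eq_sum_range (fun p => hgt k e p + 1)]
  exact sum_hgt k e m h2e hm

lemma hPm_comm : Pm e m = (2*e+1)*(m-1) := by unfold Pm; ring

def sensor (j : ℕ) (hj : j < m) : Vt k e m :=
  mkv k e m ((2*e+1)*j) 0
    (by have h1 : (2*e+1)*j ≤ (2*e+1)*(m-1) := Nat.mul_le_mul_left _ (by omega)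
        have h2 := hPm_comm e m; omega)
    (Nat.zero_le _)

@[simp] lemma vp_sensor (j hj) : vp (sensor k e m j hj) = (2*e+1)*j := rfl
@[simp] lemma vq_sensor (j hj) : vq (sensor k e m j hj) = 0 := rfl

def Sens : Finset (Vt k e m) :=
  (Finset.range m).attach.image (fun j => sensor k e m j.1 (Finset.mem_range.mp j.2))

variable {k e m} in
lemma mem_Sens {s : Vt k e m} : s ∈ Sens k e m ↔ ∃ j, ∃ hj : j < m, s = sensor k e m j hj := by
  unfold Sens
  simp only [Finset.mem_image, Finset.mem_attach, true_and, Subtype.exists]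
  constructor
  · rintro ⟨j, hj, rfl⟩; exact ⟨j, Finset.mem_range.mp hj, rfl⟩
  · rintro ⟨j, hj, rfl⟩; exact ⟨j, Finset.mem_range.mpr hj, rfl⟩

lemma card_Sens : (Sens k e m).card = m := by
  unfold Sens
  rw [Finset.card_image_of_injOn, Finset.card_attach, Finset.card_range]
  intro a _ b _ hab
  have : (2*e+1)*(a:ℕ) = (2*e+1)*(b:ℕ) := congrArg vp hab
  have := Nat.eq_of_mul_eq_mul_left (show 0 < 2*e+1 by omega) this
  exact Subtype.ext this

variable {k e m} in
lemma dist_sensor (j : ℕ) (hj : j < m) (x : Vt k e m) :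
    (Gr k e m).dist (sensor k e m j hj) x
      = ((2*e+1)*j - vp x) + (vp x - (2*e+1)*j) + vq x := by
  rw [dist_eq_Dv]
  show Dc ((2*e+1)*j, 0) (vp x, vq x) = _
  unfold Dc
  split_ifs with h <;> simp only at * <;> omega

variable {k e m} in
lemma hgt_cases {p q : ℕ} (h2e : 2*e ≤ k) (hq : q ≤ hgt k e p) :
    (p % (2*e+1) = 0 ∧ q ≤ k) ∨
      (p % (2*e+1) ≠ 0 ∧ q + max (p % (2*e+1)) (2*e+1 - p % (2*e+1)) ≤ k) := by
  rw [hgt_mod] at hq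
  split_ifs at hq with h
  · exact Or.inl ⟨h, hq⟩
  · refine Or.inr ⟨h, ?_⟩
    have h1 : p % (2*e+1) < 2*e+1 := Nat.mod_lt _ (by omega)
    omega

variable {k e m} in
lemma hgt_cases' {p q tp r : ℕ} (h2e : 2*e ≤ k) (hd : (2*e+1)*tp + r = p) (hr : r < 2*e+1)
    (hq : q ≤ hgt k e p) :
    (r = 0 ∧ q ≤ k) ∨ (r ≠ 0 ∧ q + max r (2*e+1-r) ≤ k) := by
  subst hd
  rw [hgt_mod, Nat.mul_add_mod, Nat.mod_eq_of_lt hr] at hq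
  split_ifs at hq with h
  · exact Or.inl ⟨h, hq⟩
  · exact Or.inr ⟨h, by omega⟩

set_option maxHeartbeats 3000000 in
lemma resolve_aux (h2e : 2*e ≤ k) (he1 : 1 ≤ e) (hm : 1 ≤ m)
    (p q p' q' : ℕ) (hp : p ≤ Pm e m) (hp' : p' ≤ Pm e m)
    (hq : q ≤ hgt k e p) (hq' : q' ≤ hgt k e p') (hlt : p < p')
    (hall : ∀ j, j < m →
      min (((2*e+1)*j - p) + (p - (2*e+1)*j) + q) (k+1)
        = min (((2*e+1)*j - p') + (p' - (2*e+1)*j) + q') (k+1)) : False := by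
  have hPm := hPm_comm e m
  obtain ⟨tp, r, hdp, hr⟩ : ∃ tp r, (2*e+1)*tp + r = p ∧ r < 2*e+1 :=
    ⟨p / (2*e+1), p % (2*e+1), Nat.div_add_mod p (2*e+1), Nat.mod_lt _ (by omega)⟩
  obtain ⟨tq, r', hdq, hr'⟩ : ∃ tq r', (2*e+1)*tq + r' = p' ∧ r' < 2*e+1 :=
    ⟨p' / (2*e+1), p' % (2*e+1), Nat.div_add_mod p' (2*e+1), Nat.mod_lt _ (by omega)⟩
  have hbx := hgt_cases' h2e hdp hr hq
  have hby := hgt_cases' h2e hdq hr' hq'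
  have htp : tp < m := by
    have h1 : (2*e+1)*tp ≤ (2*e+1)*(m-1) := by omega
    have h2 : tp ≤ m-1 := Nat.le_of_mul_le_mul_left h1 (by omega)
    omega
  have htq : tq < m := by
    have h1 : (2*e+1)*tq ≤ (2*e+1)*(m-1) := by omega
    have h2 : tq ≤ m-1 := Nat.le_of_mul_le_mul_left h1 (by omega)
    omega
  have Etp := hall tp htp
  have Etq := hall tq htq
  by_cases hr'0 : r' = 0
  · omega
  · have htq1 : tq + 1 < m := by
      have h1 : (2*e+1)*tq < (2*e+1)*(m-1) := by omega
      have h2 : tq < m-1 := Nat.lt_of_mul_lt_mul_left h1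
      omega
    have Etq1 := hall (tq+1) htq1
    have hmul : (2*e+1)*(tq+1) = (2*e+1)*tq + (2*e+1) := by ring
    clear hall htq htq1 hPm hp hp'
    rcases hbx with ⟨hbx1, hbx2⟩ | ⟨hbx1, hbx2⟩ <;>
      rcases hby with ⟨hby1, hby2⟩ | ⟨hby1, hby2⟩ <;>
      omega

lemma tr_upper (h2e : 2*e ≤ k) (he1 : 1 ≤ e) (hm : 1 ≤ m) :
    ThresholdResolving (Gr k e m) k ↑(Sens k e m) := by
  constructor
  · intro x y hxy
    by_contra hcon
    push_neg at hcon
    have hall : ∀ j, j < m →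
        min (((2*e+1)*j - vp x) + (vp x - (2*e+1)*j) + vq x) (k+1)
          = min (((2*e+1)*j - vp y) + (vp y - (2*e+1)*j) + vq y) (k+1) := by
      intro j hj
      have := hcon (sensor k e m j hj) (by rw [Finset.mem_coe, mem_Sens]; exact ⟨j, hj, rfl⟩)
      unfold dk at this
      rwa [dist_sensor, dist_sensor] at this
    obtain ⟨hpx, hqx⟩ := vt_bounds x
    obtain ⟨hpy, hqy⟩ := vt_bounds y
    rcases lt_trichotomy (vp x) (vp y) with h | h | h
    · exact resolve_aux k e m h2e he1 hm _ _ _ _ hpx hpy hqx hqy h hall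
    · -- same column
      have hPm := hPm_comm e m
      obtain ⟨tp, r, hdp, hr⟩ : ∃ tp r, (2*e+1)*tp + r = vp x ∧ r < 2*e+1 :=
        ⟨vp x / (2*e+1), vp x % (2*e+1), Nat.div_add_mod _ (2*e+1), Nat.mod_lt _ (by omega)⟩
      have hbx := hgt_cases' h2e hdp hr hqx
      have hby := hgt_cases' h2e (h ▸ hdp) hr hqy
      have htp : tp < m := by
        have h1 : (2*e+1)*tp ≤ (2*e+1)*(m-1) := by omega
        have h2 : tp ≤ m-1 := Nat.le_of_mul_le_mul_left h1 (by omega)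
        omega
      have hne : vq x ≠ vq y := fun hc => hxy (by rw [vt_eq_iff]; exact ⟨h, hc⟩)
      by_cases hre : r ≤ e
      · have := hall tp htp
        rw [← h] at this
        omega
      · have htp1 : tp + 1 < m := by
          have h1 : (2*e+1)*tp < (2*e+1)*(m-1) := by omega
          have h2 : tp < m-1 := Nat.lt_of_mul_lt_mul_left h1
          omega
        have := hall (tp+1) htp1
        rw [← h] at this
        have hmul : (2*e+1)*(tp+1) = (2*e+1)*tp + (2*e+1) := by ring
        omega
    · exact resolve_aux k e m h2e he1 hm _ _ _ _ hpy hpx hqy hqx h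
        (fun j hj => (hall j hj).symm)
  · intro x
    have hPm := hPm_comm e m
    obtain ⟨hpx, hqx⟩ := vt_bounds x
    obtain ⟨tp, r, hdp, hr⟩ : ∃ tp r, (2*e+1)*tp + r = vp x ∧ r < 2*e+1 :=
      ⟨vp x / (2*e+1), vp x % (2*e+1), Nat.div_add_mod _ (2*e+1), Nat.mod_lt _ (by omega)⟩
    have hbx := hgt_cases' h2e hdp hr hqx
    have htp : tp < m := by
      have h1 : (2*e+1)*tp ≤ (2*e+1)*(m-1) := by omega
      have h2 : tp ≤ m-1 := Nat.le_of_mul_le_mul_left h1 (by omega)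
      omega
    by_cases hre : r ≤ e
    · refine ⟨sensor k e m tp htp, by rw [Finset.mem_coe, mem_Sens]; exact ⟨tp, htp, rfl⟩, ?_⟩
      rw [dist_sensor]
      omega
    · have htp1 : tp + 1 < m := by
        have h1 : (2*e+1)*tp < (2*e+1)*(m-1) := by omega
        have h2 : tp < m-1 := Nat.lt_of_mul_lt_mul_left h1
        omega
      refine ⟨sensor k e m (tp+1) htp1, by rw [Finset.mem_coe, mem_Sens]; exact ⟨tp+1, htp1, rfl⟩, ?_⟩
      rw [dist_sensor]
      have hmul : (2*e+1)*(tp+1) = (2*e+1)*tp + (2*e+1) := by ring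
      omega

lemma tr_lower (hk1 : 1 ≤ k) (he1 : 1 ≤ e) (hm : 1 ≤ m) (S : Finset (Vt k e m))
    (hS : ThresholdResolving (Gr k e m) k ↑S) : m ≤ S.card := by
  have hx : ∀ j : Fin m, ∃ s, s ∈ S ∧ (vp s = (2*e+1)*(j:ℕ) ∨
      ((vp s - (2*e+1)*(j:ℕ)) + ((2*e+1)*(j:ℕ) - vp s) + vq s ≤ 1)) := by
    intro j
    have hj : (j:ℕ) < m := j.2
    have hPm := hPm_comm e m
    have haj : (2*e+1)*(j:ℕ) ≤ Pm e m := by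
      have h1 : (2*e+1)*(j:ℕ) ≤ (2*e+1)*(m-1) := Nat.mul_le_mul_left _ (by omega)
      omega
    have hmod : ((2*e+1)*(j:ℕ)) % (2*e+1) = 0 := Nat.mul_mod_right _ _
    have hk' : k ≤ hgt k e ((2*e+1)*(j:ℕ)) := by rw [hgt_mod, if_pos hmod]
    obtain ⟨s, hsS, hsd⟩ := hS.1 (mkv k e m _ k haj hk') (mkv k e m _ (k-1) haj (by omega))
      (by rw [Ne, vt_eq_iff]; simp only [vp_mkv, vq_mkv]; omega)
    refine ⟨s, hsS, ?_⟩
    unfold dk at hsd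
    rw [dist_eq_Dv, dist_eq_Dv] at hsd
    unfold Dv Dc at hsd
    simp only [vp_mkv, vq_mkv] at hsd
    split_ifs at hsd with hc
    · exact Or.inl hc
    · right; simp only [hc, ↓reduceIte] at hsd; omega
  choose g hgS hgR using hx
  have hinj : Set.InjOn g ↑(Finset.univ : Finset (Fin m)) := by
    intro a _ b _ hab
    by_contra hne
    have h1 := hgR a
    have h2 := hgR b
    rw [hab] at h1
    have hnecoe : (a:ℕ) ≠ (b:ℕ) := fun hc => hne (Fin.ext hc)
    rcases Nat.lt_or_ge (a:ℕ) (b:ℕ) with h | h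
    · have e1 : (2*e+1)*(a:ℕ) + (2*e+1)*((b:ℕ)-(a:ℕ)) = (2*e+1)*(b:ℕ) := by
        rw [← Nat.mul_add]; congr 1; omega
      have e2 : (2*e+1) ≤ (2*e+1)*((b:ℕ)-(a:ℕ)) := Nat.le_mul_of_pos_right _ (by omega)
      omega
    · have h' : (b:ℕ) < (a:ℕ) := by omega
      have e1 : (2*e+1)*(b:ℕ) + (2*e+1)*((a:ℕ)-(b:ℕ)) = (2*e+1)*(a:ℕ) := by
        rw [← Nat.mul_add]; congr 1; omega
      have e2 : (2*e+1) ≤ (2*e+1)*((a:ℕ)-(b:ℕ)) := Nat.le_mul_of_pos_right _ (by omega)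
      omega
  have := Finset.card_le_card_of_injOn g (fun j _ => hgS j) hinj
  simpa using this

lemma tmd_gr (hk1 : 1 ≤ k) (h2e : 2*e ≤ k) (he1 : 1 ≤ e) (hm : 1 ≤ m) :
    Tmd (Gr k e m) k = m := by
  have hmem : m ∈ {n | ∃ S : Finset (Vt k e m),
      ThresholdResolving (Gr k e m) k ↑S ∧ S.card = n} :=
    ⟨Sens k e m, tr_upper k e m h2e he1 hm, card_Sens k e m⟩
  refine le_antisymm (Nat.sInf_le hmem) (le_csInf ⟨m, hmem⟩ ?_)
  rintro n ⟨S, hS, rfl⟩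
  exact tr_lower k e m hk1 he1 hm S hS

end Construction
end Stmt16



/-- for `k ≢ 1 (mod 3)` there exists a tree on exactly
`(k+1)m + (m−1)(k²+k)/3` vertices with threshold-k metric dimension `m`. -/
theorem stmt16 (k m : ℕ) (hk : 1 ≤ k) (hm : 1 ≤ m) (hk3 : k % 3 ≠ 1) :
    ∃ G : SimpleGraph (Fin ((k + 1) * m + (m - 1) * ((k ^ 2 + k) / 3))),
      G.IsTree ∧ Tmd G k = m := by
  set e := (k+1)/3 with he
  have hke : 3*e = k ∨ 3*e = k+1 := by omega
  have he1 : 1 ≤ e := by omega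
  have h2e : 2*e ≤ k := by omega
  have hc3 : (k^2 + k)/3 = e*(2*k+1-3*e) := by
    rcases hke with h | h
    · have h4 : k^2 + k = 3*(e*(k+1)) := by
        rw [show k^2+k = k*(k+1) by ring, ← h]; ring
      rw [h4, Nat.mul_div_cancel_left _ (by norm_num : 0 < 3), show 2*k+1-3*e = k+1 by omega]
    · have h4 : k^2 + k = 3*(e*k) := by
        rw [show k^2+k = k*(k+1) by ring, ← h]; ring
      rw [h4, Nat.mul_div_cancel_left _ (by norm_num : 0 < 3), show 2*k+1-3*e = k by omega]
  have hcard : Fintype.card (Stmt16.Vt k e m) = (k + 1) * m + (m - 1) * ((k ^ 2 + k) / 3) := by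
    rw [Stmt16.card_vt k e m h2e hm, hc3]
  let eqv := Fintype.equivFinOfCardEq hcard
  refine ⟨(Stmt16.Gr k e m).map eqv.toEmbedding, ?_, ?_⟩
  · exact Stmt16.iso_isTree (SimpleGraph.Iso.map eqv (Stmt16.Gr k e m))
      (Stmt16.gr_isTree k e m hm)
  · erw [Stmt16.Tmd_iso (SimpleGraph.Iso.map eqv (Stmt16.Gr k e m)) k]
    exact Stmt16.tmd_gr k e m hk h2e he1 hm
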